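/- Let c* ∈ (0,1) satisfy 2c*·ln(1/c*) = 1 - c*. Define g : (0,∞) → ℝ by g(r) = -ln r for r ∈ (0, c*], g(r) = (r-1)²/(2c*(1-c*)) for r ∈ (c*, 1], and g(r) = 0 for r > 1. Then g is convex, non-increasing, and continuously differentiable on (0,∞). -/

import Mathlib

open Set

/-- The function `g` from (2.12) is convex, non-increasing and C¹ on `(0,∞)`. -/
theorem stmt4 (c : ℝ) (hc : c ∈ Set.Ioo (0:ℝ) 1)
    (hceq : 2 * c * Real.log (1/c) = 1 - c)
    (g : ℝ → ℝ)
    (hg1 : ∀ r ∈ Set.Ioc (0:ℝ) c, g r = -Real.log r)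
    (hg2 : ∀ r ∈ Set.Ioc c 1, g r = (r-1)^2 / (2*c*(1-c)))
    (hg3 : ∀ r > (1:ℝ), g r = 0) :
    ConvexOn ℝ (Set.Ioi (0:ℝ)) g ∧ AntitoneOn g (Set.Ioi (0:ℝ)) ∧
      ContDiffOn ℝ 1 g (Set.Ioi (0:ℝ)) := by
  obtain ⟨hc0, hc1⟩ := hc
  have hcne : c ≠ 0 := ne_of_gt hc0
  have h1c : (0:ℝ) < 1 - c := by linarith
  have hden : (0:ℝ) < c * (1 - c) := by positivity
  -- key matching equation
  have hkey : -Real.log c = (1 - c) / (2 * c) := by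
    rw [one_div, Real.log_inv] at hceq
    field_simp
    linarith
  set q : ℝ → ℝ := fun r => (r - 1) ^ 2 / (2 * c * (1 - c)) with hq
  have hgc : g c = q c := by
    rw [hg1 c ⟨hc0, le_refl c⟩, hq]
    simp only
    rw [hkey]
    field_simp
    ring
  have hg1' : g 1 = 0 := by
    rw [hg2 1 ⟨hc1, le_refl 1⟩]; simp
  -- derivative of q
  have hq' : ∀ x : ℝ, HasDerivAt q ((x - 1) / (c * (1 - c))) x := by
    intro x
    have h : HasDerivAt q _ x := (((hasDerivAt_id' x).sub_const 1).pow 2).div_const (2 * c * (1 - c))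
    convert h using 1
    field_simp
    ring
  set D : ℝ → ℝ := fun x => if x ≤ c then -1 / x else if x ≤ 1 then (x - 1) / (c * (1 - c)) else 0 with hD
  have hDc : D c = -1 / c := by simp [hD]
  have hDlin : ∀ x, c < x → x ≤ 1 → D x = (x - 1) / (c * (1 - c)) := by
    intro x h1 h2; simp [hD, not_le.mpr h1, h2]
  have hD1 : ∀ x, 1 < x → D x = 0 := by
    intro x h1; simp [hD, not_le.mpr (lt_trans hc1 h1), not_le.mpr h1]
  have hDceq : -1 / c = (c - 1) / (c * (1 - c)) := by field_simp; ring
  -- derivative of g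
  have hderiv : ∀ x ∈ Ioi (0:ℝ), HasDerivAt g (D x) x := by
    intro x hx
    simp only [mem_Ioi] at hx
    rcases lt_trichotomy x c with hxc | hxc | hxc
    · -- x < c : g = -log near x
      have h : HasDerivAt (fun r => -Real.log r) (-1 / x) x := by
        rw [neg_div, one_div]; exact (Real.hasDerivAt_log (ne_of_gt hx)).neg
      have he : g =ᶠ[nhds x] fun r => -Real.log r := by
        filter_upwards [Ioo_mem_nhds hx hxc] with r hr
        exact hg1 r ⟨hr.1, le_of_lt hr.2⟩
      have := h.congr_of_eventuallyEq he
      simpa [hD, le_of_lt hxc] using this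
    · -- x = c
      subst hxc
      rw [hDc]
      rw [← hasDerivWithinAt_univ, ← Iic_union_Ici (a := x)]
      refine HasDerivWithinAt.union ?_ ?_
      ·
        have h : HasDerivWithinAt (fun r => -Real.log r) (-1 / x) (Iic x) x := by
          exact (by rw [neg_div, one_div]; exact (Real.hasDerivAt_log hcne).neg : HasDerivAt (fun r => -Real.log r) (-1/x) x).hasDerivWithinAt
        apply h.congr_of_eventuallyEq
        · filter_upwards [mem_nhdsWithin_of_mem_nhds (Ioi_mem_nhds hc0), self_mem_nhdsWithin] with r hr1 hr2
          exact hg1 r ⟨hr1, hr2⟩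
        · exact hg1 x ⟨hc0, le_refl x⟩
      ·
        have h : HasDerivWithinAt q (-1 / x) (Ici x) x := by
          rw [hDceq]; exact (hq' x).hasDerivWithinAt
        apply h.congr_of_eventuallyEq
        · filter_upwards [mem_nhdsWithin_of_mem_nhds (Iio_mem_nhds hc1), self_mem_nhdsWithin] with r hr1 hr2
          rcases eq_or_lt_of_le (mem_Ici.mp hr2) with h | h
          · rw [← h]; exact hgc
          · exact hg2 r ⟨h, le_of_lt hr1⟩
        · exact hgc
    · rcases lt_trichotomy x 1 with hx1 | hx1 | hx1
      · -- c < x < 1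
        have he : g =ᶠ[nhds x] q := by
          filter_upwards [Ioo_mem_nhds hxc hx1] with r hr
          exact hg2 r ⟨hr.1, le_of_lt hr.2⟩
        have := (hq' x).congr_of_eventuallyEq he
        rwa [hDlin x hxc (le_of_lt hx1)]
      · -- x = 1
        subst hx1
        have hD1' : D 1 = 0 := by
          rw [hDlin 1 hxc le_rfl]; simp
        rw [hD1']
        rw [← hasDerivWithinAt_univ, ← Iic_union_Ici (a := (1:ℝ))]
        refine HasDerivWithinAt.union ?_ ?_
        ·
          have h : HasDerivWithinAt q 0 (Iic 1) 1 := by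
            have := (hq' 1).hasDerivWithinAt (s := Iic 1)
            simpa using this
          apply h.congr_of_eventuallyEq
          · filter_upwards [mem_nhdsWithin_of_mem_nhds (Ioi_mem_nhds hc1), self_mem_nhdsWithin] with r hr1 hr2
            exact hg2 r ⟨hr1, hr2⟩
          · rw [hg1']; simp [hq]
        ·
          have h : HasDerivWithinAt (fun _ : ℝ => (0:ℝ)) 0 (Ici 1) 1 :=
            (hasDerivAt_const _ _).hasDerivWithinAt
          apply h.congr_of_eventuallyEq
          · filter_upwards [self_mem_nhdsWithin] with r hr
            rcases eq_or_lt_of_le (mem_Ici.mp hr) with h' | h'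
            · rw [← h']; exact hg1'
            · exact hg3 r h'
          · exact hg1'
      · -- x > 1
        have he : g =ᶠ[nhds x] fun _ => (0:ℝ) := by
          filter_upwards [Ioi_mem_nhds hx1] with r hr
          exact hg3 r hr
        have := (hasDerivAt_const x (0:ℝ)).congr_of_eventuallyEq he
        rwa [hD1 x hx1]
  have hdiff : DifferentiableOn ℝ g (Ioi 0) := fun x hx =>
    ((hderiv x hx).differentiableAt).differentiableWithinAt
  have hcont : ContinuousOn g (Ioi 0) := hdiff.continuousOn
  have hderiveq : ∀ x ∈ Ioi (0:ℝ), deriv g x = D x := fun x hx => (hderiv x hx).deriv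
  -- continuity of D on Ioi 0
  have hcontD : ContinuousOn D (Ioi 0) := by
    have hD2 : Continuous fun x : ℝ => if x ≤ 1 then (x - 1) / (c * (1 - c)) else 0 := by
      apply Continuous.if_le
      · exact (continuous_id.sub continuous_const).div_const _
      · exact continuous_const
      · exact continuous_id
      · exact continuous_const
      · intro x hx; simp [hx]
    rw [hD]
    apply ContinuousOn.if
    · intro a ha
      have hac : a = c := by
        have := ha.2
        rw [show {a : ℝ | a ≤ c} = Iic c from rfl, frontier_Iic, mem_singleton_iff] at this
        exact this
      subst hac
      rw [if_pos hc1.le, hDceq]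
    · have hsub : Ioi (0:ℝ) ∩ closure {a : ℝ | a ≤ c} ⊆ {x : ℝ | x ≠ 0} := by
        intro x hx
        exact ne_of_gt hx.1
      exact (continuousOn_const.div continuousOn_id (fun x hx => ne_of_gt hx.1))
    · exact hD2.continuousOn
  -- D is nonpositive on Ioi 0
  have hDnonpos : ∀ x ∈ Ioi (0:ℝ), D x ≤ 0 := by
    intro x hx
    simp only [mem_Ioi] at hx
    rcases le_or_gt x c with h1 | h1
    · simp only [hD, if_pos h1]
      apply div_nonpos_of_nonpos_of_nonneg <;> linarith
    · rcases le_or_gt x 1 with h2 | h2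
      · rw [hDlin x h1 h2]
        apply div_nonpos_of_nonpos_of_nonneg <;> nlinarith
      · rw [hD1 x h2]
  -- D is monotone on Ioi 0
  have hDmono : MonotoneOn D (Ioi 0) := by
    intro x hx y hy hxy
    simp only [mem_Ioi] at hx hy
    have key2 : ∀ z, c < z → z ≤ 1 → -1 / c ≤ (z - 1) / (c * (1 - c)) := by
      intro z h1 h2
      rw [hDceq, div_le_div_iff₀ hden hden]
      nlinarith
    rcases le_or_gt x c with h1 | h1
    · have hx' : D x = -1 / x := by simp [hD, h1]
      have step : -1 / x ≤ -1 / c := by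
        rw [div_le_div_iff₀ hx hc0]; nlinarith
      rcases le_or_gt y c with h2 | h2
      · have hy' : D y = -1 / y := by simp [hD, h2]
        rw [hx', hy', div_le_div_iff₀ hx hy]; nlinarith
      · rcases le_or_gt y 1 with h3 | h3
        · rw [hx', hDlin y h2 h3]
          exact le_trans step (key2 y h2 h3)
        · rw [hx', hD1 y h3]
          apply div_nonpos_of_nonpos_of_nonneg <;> linarith
    · rcases le_or_gt y 1 with h3 | h3
      · have h1y : c < y := lt_of_lt_of_le h1 hxy
        rw [hDlin x h1 (le_trans hxy h3), hDlin y h1y h3]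
        rw [div_le_div_iff₀ hden hden]; nlinarith
      · rw [hD1 y h3]
        exact hDnonpos x (mem_Ioi.mpr hx)
  -- assemble
  have hdiffint : DifferentiableOn ℝ g (interior (Ioi (0:ℝ))) := by
    rwa [interior_Ioi]
  refine ⟨?_, ?_, ?_⟩
  · apply MonotoneOn.convexOn_of_deriv (convex_Ioi 0) hcont hdiffint
    rw [interior_Ioi]
    intro x hx y hy hxy
    rw [hderiveq x hx, hderiveq y hy]
    exact hDmono hx hy hxy
  · apply antitoneOn_of_deriv_nonpos (convex_Ioi 0) hcont hdiffint
    rw [interior_Ioi]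
    intro x hx
    rw [hderiveq x hx]
    exact hDnonpos x hx
  · rw [show (1 : WithTop ℕ∞) = 0 + 1 from rfl, contDiffOn_succ_iff_deriv_of_isOpen isOpen_Ioi]
    refine ⟨hdiff, by simp, ?_⟩
    rw [contDiffOn_zero]
    exact hcontD.congr hderiveq
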